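/- Let 0 < x < π and 0 < δ ≤ π − x. Then there exists ξ in the image of the function y ↦ y·√(log(1 + 1/y)) on the interval [x, x + δ] such that −∫ₓ^{x+δ} I(x,y)·y·√(log(1 + 1/y)) dy = ξ·( ( S₂(δ) + S₂(2x + δ) − 2·S₂(x + δ) ) − ( S₂(0) + S₂(2x) − 2·S₂(x) ) ), where S₂(t) = ∑_{n=1}^{∞} sin(n t)/n². -/

import Mathlib

open Set

/-- The Clausen function of order 2, `S₂(t) = ∑_{n=1}^∞ sin(n t)/n²`. -/
noncomputable def clausenS2 (t : ℝ) : ℝ := ∑' n : ℕ, Real.sin ((n + 1) * t) / ((n : ℝ) + 1) ^ 2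

/-- The kernel `I(x,y) = log( sin((y−x)/2)·sin((x+y)/2) / sin(y/2)² )`. -/
noncomputable def Iker (x y : ℝ) : ℝ :=
  Real.log (Real.sin ((y - x) / 2) * Real.sin ((x + y) / 2) / Real.sin (y / 2) ^ 2)

open Real MeasureTheory intervalIntegral Filter Finset Topology


noncomputable def C1 (t : ℝ) : ℝ := -Real.log (2 * Real.sin (t / 2))

lemma measurable_C1 : Measurable C1 :=
  (Real.measurable_log.comp ((Real.continuous_sin.measurable.comp
    (measurable_id.div_const 2)).const_mul 2)).neg

lemma intervalIntegrable_log_zero {c : ℝ} (hc0 : 0 ≤ c) (hc : c ≤ 1) :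
    IntervalIntegrable Real.log volume 0 c := by
  have h : IntervalIntegrable (fun t => -Real.log t) volume 0 c := by
    apply intervalIntegrable_deriv_of_nonneg (g := fun t => t - t * Real.log t)
    · exact (continuous_id.sub Real.continuous_mul_log).continuousOn
    · intro x hx
      have hx0 : 0 < x := by
        rcases hx with ⟨h1, _⟩
        simpa [inf_eq_left.mpr hc0] using h1
      have h1 : HasDerivAt (fun t : ℝ => t * Real.log t) (Real.log x + 1) x := by
        have := (hasDerivAt_id x).mul (Real.hasDerivAt_log hx0.ne')
        simp only [id_eq, one_mul] at this
        rw [mul_inv_cancel₀ hx0.ne'] at this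
        exact this
      have : HasDerivAt (fun t : ℝ => t - t * Real.log t) (1 - (Real.log x + 1)) x :=
        (hasDerivAt_id x).sub h1
      simpa using this
    · intro x hx
      rcases hx with ⟨h1, h2⟩
      have hx0 : 0 < x := by simpa [inf_eq_left.mpr hc0] using h1
      have hx1 : x ≤ 1 := by
        have : x < 0 ⊔ c := h2
        rw [sup_eq_right.mpr hc0] at this
        linarith
      simpa using Real.log_nonpos hx0.le hx1
  have := h.neg
  convert this using 1
  ext t; simp

lemma sin_half_pos {t : ℝ} (h0 : 0 < t) (h2 : t < 2 * π) : 0 < Real.sin (t / 2) :=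
  Real.sin_pos_of_pos_of_lt_pi (by linarith) (by linarith)

lemma continuousOn_C1 : ContinuousOn C1 (Ioo 0 (2 * π)) := by
  apply ContinuousOn.neg
  apply ContinuousOn.log
  · fun_prop
  · intro t ht
    have := sin_half_pos ht.1 ht.2
    positivity

lemma C1_le_small {t : ℝ} (h0 : 0 < t) (h1 : t ≤ 1 / 2) :
    0 < C1 t ∧ C1 t ≤ Real.log π - Real.log t := by
  have hpi := Real.pi_gt_three
  have hs : 0 < Real.sin (t / 2) := sin_half_pos h0 (by linarith)
  constructor
  · have hle : 2 * Real.sin (t / 2) ≤ t := by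
      have := Real.sin_le (x := t / 2) (by linarith)
      linarith
    have : Real.log (2 * Real.sin (t / 2)) < 0 :=
      Real.log_neg (by positivity) (by linarith)
    simpa [C1] using this
  · have hge : t / π ≤ 2 * Real.sin (t / 2) := by
      have := Real.mul_le_sin (x := t / 2) (by linarith) (by linarith)
      have hp : 2 / π * (t / 2) = t / π := by field_simp
      rw [hp] at this
      nlinarith [Real.pi_pos]
    have hlog := Real.log_le_log (by positivity) hge
    rw [Real.log_div h0.ne' (by positivity)] at hlog
    simp only [C1]
    linarith

lemma intervalIntegrable_C1_zero : IntervalIntegrable C1 volume 0 (1 / 2 : ℝ) := by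
  rw [intervalIntegrable_iff_integrableOn_Ioc_of_le (by norm_num)]
  have hdom : IntegrableOn (fun t => Real.log π - Real.log t) (Ioc 0 (1 / 2 : ℝ)) volume := by
    have h1 : IntervalIntegrable (fun t => Real.log π - Real.log t) volume 0 (1 / 2) := by
      exact (_root_.intervalIntegrable_const (c := Real.log π)).sub
        (intervalIntegrable_log_zero (by norm_num) (by norm_num))
    rw [intervalIntegrable_iff_integrableOn_Ioc_of_le (by norm_num)] at h1
    exact h1
  apply MeasureTheory.Integrable.mono hdom
  · exact (measurable_C1.aestronglyMeasurable).restrict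
  · rw [ae_restrict_iff' measurableSet_Ioc]
    filter_upwards with t ht
    rcases C1_le_small ht.1 ht.2 with ⟨hpos, hle⟩
    have hlogt : Real.log t ≤ 0 := Real.log_nonpos ht.1.le (by linarith [ht.2])
    have : 0 ≤ Real.log π - Real.log t := by
      have := Real.log_nonneg (by linarith [Real.pi_gt_three] : (1:ℝ) ≤ π)
      linarith
    rw [Real.norm_eq_abs, Real.norm_eq_abs, abs_of_pos hpos, abs_of_nonneg this]
    exact hle

lemma intervalIntegrable_C1 {a b : ℝ} (h0 : 0 ≤ a) (hab : a ≤ b) (hb : b < 2 * π) :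
    IntervalIntegrable C1 volume a b := by
  have hpi := Real.pi_gt_three
  have hcont : ∀ {u v : ℝ}, 0 < u → u ≤ v → v < 2 * π → IntervalIntegrable C1 volume u v := by
    intro u v hu huv hv
    apply ContinuousOn.intervalIntegrable
    apply continuousOn_C1.mono
    rw [Set.uIcc_of_le huv]
    intro t ht
    exact ⟨lt_of_lt_of_le hu ht.1, lt_of_le_of_lt ht.2 hv⟩
  rcases eq_or_lt_of_le h0 with rfl | ha
  · rcases le_or_gt b (1 / 2) with hb2 | hb2
    · apply intervalIntegrable_C1_zero.mono_set
      rw [Set.uIcc_of_le hab, Set.uIcc_of_le (by norm_num : (0:ℝ) ≤ 1/2)]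
      exact Icc_subset_Icc le_rfl hb2
    · exact intervalIntegrable_C1_zero.trans (hcont (by norm_num) hb2.le hb)
  · exact hcont ha hab hb

noncomputable def Sp (n : ℕ) (t : ℝ) : ℝ :=
  ∑ k ∈ Finset.range n, Real.cos ((k + 1) * t) / (k + 1)

lemma sin_sum_identity (n : ℕ) (t : ℝ) :
    2 * Real.sin (t / 2) * ∑ k ∈ Finset.range n, Real.sin ((k + 1) * t) =
      Real.cos (t / 2) - Real.cos ((n + 1 / 2) * t) := by
  induction n with
  | zero => simp [Finset.sum_range_zero]; ring_nf
  | succ n ih =>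
    rw [Finset.sum_range_succ, mul_add, ih]
    have key : Real.cos ((n + 1 / 2) * t) - Real.cos ((n + 1 + 1 / 2) * t) =
        2 * Real.sin (t / 2) * Real.sin ((n + 1) * t) := by
      rw [Real.cos_sub_cos]
      have e1 : ((n : ℝ) + 1 / 2) * t + (n + 1 + 1 / 2) * t = 2 * ((n + 1) * t) := by ring
      have e2 : ((n : ℝ) + 1 / 2) * t - (n + 1 + 1 / 2) * t = 2 * (-(t / 2)) := by ring
      rw [e1, e2]
      have e3 : 2 * (((n : ℝ) + 1) * t) / 2 = ((n : ℝ) + 1) * t := by ring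
      have e4 : 2 * -(t / 2) / 2 = -(t / 2) := by ring
      rw [e3, e4, Real.sin_neg]
      ring
    push_cast
    push_cast at key
    linarith [key]

lemma hasDerivAt_G (n : ℕ) {t : ℝ} (h0 : 0 < t) (h2 : t < 2 * π) :
    HasDerivAt (fun s => C1 s - Sp n s)
      (-Real.cos (((n : ℝ) + 1 / 2) * t) / (2 * Real.sin (t / 2))) t := by
  have hs : 0 < Real.sin (t / 2) := sin_half_pos h0 h2
  have hC : HasDerivAt C1 (-(Real.cos (t / 2) / (2 * Real.sin (t / 2)))) t := by
    have h1 : HasDerivAt (fun s : ℝ => 2 * Real.sin (s / 2)) (2 * (Real.cos (t / 2) * (1 / 2))) t := by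
      have : HasDerivAt (fun s : ℝ => s / 2) (1 / 2) t := (hasDerivAt_id t).div_const 2
      exact ((Real.hasDerivAt_sin (t / 2)).comp t this).const_mul 2
    have h2' : HasDerivAt (fun s : ℝ => Real.log (2 * Real.sin (s / 2)))
        (2 * (Real.cos (t / 2) * (1 / 2)) / (2 * Real.sin (t / 2))) t :=
      h1.log (by positivity)
    have := h2'.neg
    refine this.congr_deriv ?_
    ring
  have hS : HasDerivAt (Sp n) (∑ k ∈ Finset.range n, -Real.sin (((k : ℝ) + 1) * t)) t := by
    apply HasDerivAt.fun_sum
    intro k _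
    have h1 : HasDerivAt (fun s : ℝ => ((k : ℝ) + 1) * s) ((k : ℝ) + 1) t := by
      simpa using (hasDerivAt_id t).const_mul ((k : ℝ) + 1)
    have h2' : HasDerivAt (fun s : ℝ => Real.cos (((k : ℝ) + 1) * s))
        (-Real.sin (((k : ℝ) + 1) * t) * ((k : ℝ) + 1)) t :=
      (Real.hasDerivAt_cos _).comp t h1
    have := h2'.div_const ((k : ℝ) + 1)
    refine this.congr_deriv ?_
    field_simp
  have := hC.sub hS
  refine this.congr_deriv ?_
  have hsum := sin_sum_identity n t
  have hne : 2 * Real.sin (t / 2) ≠ 0 := by positivity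
  have hne : Real.sin (t / 2) ≠ 0 := hs.ne'
  have hsum' : ∑ k ∈ Finset.range n, Real.sin (((k : ℝ) + 1) * t) =
      (Real.cos (t / 2) - Real.cos (((n : ℝ) + 1 / 2) * t)) / (2 * Real.sin (t / 2)) := by
    rw [eq_div_iff (by positivity)]
    linear_combination hsum
  rw [Finset.sum_neg_distrib, hsum']
  ring

lemma oscillation_bound {A B : ℝ} (hA : 0 < A) (hB : B < 2 * π) (hAB : A ≤ B) :
    ∃ K : ℝ, 0 ≤ K ∧ ∀ (n : ℕ) (t₀ t₁ : ℝ), t₀ ∈ Icc A B → t₁ ∈ Icc A B →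
      |∫ s in t₀..t₁, Real.cos (((n : ℝ) + 1 / 2) * s) / (2 * Real.sin (s / 2))| ≤
        K / ((n : ℝ) + 1 / 2) := by
  -- minimum of sin(s/2) on [A,B]
  obtain ⟨c, hc, hcmin⟩ : ∃ c ∈ Icc A B, ∀ s ∈ Icc A B,
      Real.sin (c / 2) ≤ Real.sin (s / 2) := by
    have hcomp : IsCompact (Icc A B) := isCompact_Icc
    have hne : (Icc A B).Nonempty := ⟨A, le_refl A, hAB⟩
    obtain ⟨c, hc, hcmin⟩ := hcomp.exists_isMinOn hne
      (Continuous.continuousOn (by fun_prop : Continuous fun s : ℝ => Real.sin (s / 2)))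
    exact ⟨c, hc, fun s hs => hcmin hs⟩
  set m := Real.sin (c / 2) with hm
  have hm0 : 0 < m := sin_half_pos (lt_of_lt_of_le hA hc.1) (lt_of_le_of_lt hc.2 hB)
  refine ⟨1 / m + (B - A) / (4 * m ^ 2),
    add_nonneg (div_nonneg zero_le_one hm0.le)
      (div_nonneg (by linarith) (by nlinarith)), ?_⟩
  intro n t₀ t₁ ht₀ ht₁
  set ω : ℝ := (n : ℝ) + 1 / 2 with hω
  have hω0 : 0 < ω := by rw [hω]; positivity
  -- integration by parts
  set φ : ℝ → ℝ := fun s => (2 * Real.sin (s / 2))⁻¹ with hφ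
  set φ' : ℝ → ℝ := fun s => -(Real.cos (s / 2)) / (4 * Real.sin (s / 2) ^ 2) with hφ'
  set v : ℝ → ℝ := fun s => Real.sin (ω * s) / ω with hv
  set v' : ℝ → ℝ := fun s => Real.cos (ω * s) with hv'
  have hsub : uIcc t₀ t₁ ⊆ Icc A B := uIcc_subset_Icc ht₀ ht₁
  have hsin : ∀ s ∈ Icc A B, m ≤ Real.sin (s / 2) := hcmin
  have hφd : ∀ s ∈ uIcc t₀ t₁, HasDerivAt φ (φ' s) s := by
    intro s hs
    have hss := hsin s (hsub hs)
    have h1 : HasDerivAt (fun u : ℝ => 2 * Real.sin (u / 2)) (2 * (Real.cos (s / 2) * (1 / 2))) s := by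
      have : HasDerivAt (fun u : ℝ => u / 2) (1 / 2) s := (hasDerivAt_id s).div_const 2
      exact ((Real.hasDerivAt_sin (s / 2)).comp s this).const_mul 2
    have := h1.inv (by nlinarith)
    refine this.congr_deriv ?_
    field_simp [hφ']
    ring
  have hvd : ∀ s ∈ uIcc t₀ t₁, HasDerivAt v (v' s) s := by
    intro s _
    have h1 : HasDerivAt (fun u : ℝ => ω * u) ω s := by
      simpa using (hasDerivAt_id s).const_mul ω
    have h2 : HasDerivAt (fun u : ℝ => Real.sin (ω * u)) (Real.cos (ω * s) * ω) s :=
      (Real.hasDerivAt_sin _).comp s h1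
    have := h2.div_const ω
    refine this.congr_deriv ?_
    field_simp [hv']
    rfl
  have hcontφ' : ContinuousOn φ' (uIcc t₀ t₁) := by
    apply ContinuousOn.div (by fun_prop) (by fun_prop)
    intro s hs
    have := hsin s (hsub hs)
    nlinarith
  have hintφ' : IntervalIntegrable φ' volume t₀ t₁ := hcontφ'.intervalIntegrable
  have hintv' : IntervalIntegrable v' volume t₀ t₁ :=
    ((Real.continuous_cos.comp (continuous_const.mul continuous_id)).intervalIntegrable _ _)
  have hparts := intervalIntegral.integral_mul_deriv_eq_deriv_mul hφd hvd hintφ' hintv'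
  -- the integral we want equals ∫ φ * v'
  have hrw : (∫ s in t₀..t₁, Real.cos (ω * s) / (2 * Real.sin (s / 2))) =
      ∫ s in t₀..t₁, φ s * v' s := by
    apply intervalIntegral.integral_congr
    intro s _
    simp [hφ, hv', div_eq_mul_inv, mul_comm]
  rw [hrw, hparts]
  -- bounds
  have hb1 : ∀ s ∈ Icc A B, |φ s| ≤ 1 / (2 * m) := by
    intro s hs
    have h1 := hsin s hs
    rw [abs_inv, abs_of_pos (by nlinarith : (0:ℝ) < 2 * Real.sin (s / 2))]
    rw [one_div]
    apply inv_anti₀ (by positivity)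
    nlinarith
  have hb2 : ∀ s, |v s| ≤ 1 / ω := by
    intro s
    rw [hv, abs_div, abs_of_pos hω0, div_le_div_iff_of_pos_right hω0]
    exact Real.abs_sin_le_one _ |>.trans (le_refl 1) |>.trans_eq rfl
  have hb3 : ∀ s ∈ Icc A B, |φ' s * v s| ≤ 1 / (4 * m ^ 2) * (1 / ω) := by
    intro s hs
    rw [abs_mul]
    apply mul_le_mul _ (hb2 s) (abs_nonneg _) (by positivity)
    have h1 := hsin s hs
    rw [hφ', abs_div, abs_neg, abs_of_pos (by nlinarith : (0:ℝ) < 4 * Real.sin (s / 2) ^ 2)]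
    apply div_le_div₀ (by positivity) (Real.abs_cos_le_one _) (by nlinarith)
    nlinarith
  have hIbound : |∫ s in t₀..t₁, φ' s * v s| ≤ (B - A) * (1 / (4 * m ^ 2) * (1 / ω)) := by
    have := intervalIntegral.norm_integral_le_of_norm_le_const
      (C := 1 / (4 * m ^ 2) * (1 / ω)) (f := fun s => φ' s * v s) (a := t₀) (b := t₁) ?_
    · refine this.trans ?_
      have h1 : |t₁ - t₀| ≤ B - A :=
        abs_le.mpr ⟨by linarith [ht₀.2, ht₁.1], by linarith [ht₀.1, ht₁.2]⟩
      have hC : (0:ℝ) ≤ 1 / (4 * m ^ 2) * (1 / ω) := by positivity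
      nlinarith [abs_nonneg (t₁ - t₀)]
    · intro s hs
      have hmem : s ∈ Icc A B := hsub (uIoc_subset_uIcc hs)
      rw [Real.norm_eq_abs]
      exact hb3 s hmem
  have e1 : |φ t₁ * v t₁| ≤ 1 / (2 * m) * (1 / ω) := by
    rw [abs_mul]
    exact mul_le_mul (hb1 t₁ ht₁) (hb2 t₁) (abs_nonneg _) (by positivity)
  have e0 : |φ t₀ * v t₀| ≤ 1 / (2 * m) * (1 / ω) := by
    rw [abs_mul]
    exact mul_le_mul (hb1 t₀ ht₀) (hb2 t₀) (abs_nonneg _) (by positivity)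
  have htri : |φ t₁ * v t₁ - φ t₀ * v t₀ - ∫ s in t₀..t₁, φ' s * v s| ≤
      |φ t₁ * v t₁| + |φ t₀ * v t₀| + |∫ s in t₀..t₁, φ' s * v s| := by
    calc |φ t₁ * v t₁ - φ t₀ * v t₀ - ∫ s in t₀..t₁, φ' s * v s|
        ≤ |φ t₁ * v t₁ - φ t₀ * v t₀| + |∫ s in t₀..t₁, φ' s * v s| := abs_sub _ _
      _ ≤ _ := by
          have h2 := abs_sub (φ t₁ * v t₁) (φ t₀ * v t₀)
          linarith
  have heq : (1 / m + (B - A) / (4 * m ^ 2)) / ω =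
      1 / (2 * m) * (1 / ω) + 1 / (2 * m) * (1 / ω) + (B - A) * (1 / (4 * m ^ 2) * (1 / ω)) := by
    field_simp
    ring
  rw [heq]
  linarith

lemma alternating_harmonic :
    Tendsto (fun n => ∑ k ∈ Finset.range n, (-1 : ℝ) ^ k / (k + 1)) atTop (𝓝 (Real.log 2)) := by
  set f : ℕ → ℝ := fun k => (-1 : ℝ) ^ k / (k + 1) with hf
  -- convergence to some limit by the alternating series test
  obtain ⟨l, hl⟩ : ∃ l, Tendsto (fun n => ∑ k ∈ Finset.range n, f k) atTop (𝓝 l) := by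
    obtain ⟨l, hl⟩ := Antitone.tendsto_alternating_series_of_tendsto_zero
      (f := fun k : ℕ => 1 / ((k : ℝ) + 1))
      (by
        intro i j hij
        apply div_le_div_of_nonneg_left zero_le_one (by positivity)
        have : (i : ℝ) ≤ j := Nat.cast_le.mpr hij
        linarith)
      (by
        have := tendsto_one_div_add_atTop_nhds_zero_nat (𝕜 := ℝ)
        exact this)
    refine ⟨l, hl.congr fun n => Finset.sum_congr rfl fun k _ => ?_⟩
    rw [hf]
    ring
  -- Abel's limit theorem
  have habel := Real.tendsto_tsum_powerSeries_nhdsWithin_lt hl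
  -- identify the limit via log(1+x)/x
  have hlog : Tendsto (fun x : ℝ => ∑' n : ℕ, f n * x ^ n) (nhdsWithin 1 (Iio 1))
      (𝓝 (Real.log 2)) := by
    have hcong : ∀ x : ℝ, x ∈ Ioo (0 : ℝ) 1 →
        (∑' n : ℕ, f n * x ^ n) = Real.log (1 + x) / x := by
      intro x hx
      have habs : |(-x)| < 1 := by rw [abs_neg, abs_of_pos hx.1]; exact hx.2
      have h1 := Real.hasSum_pow_div_log_of_abs_lt_one habs
      have h2 : HasSum (fun n : ℕ => f n * x ^ n) (Real.log (1 + x) / x) := by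
        have h3 := (h1.neg).div_const x
        have heq : ∀ n : ℕ, -((-x) ^ (n + 1) / (n + 1)) / x = f n * x ^ n := by
          intro n
          rw [hf]
          have : (-x) ^ (n + 1) = -((-1 : ℝ) ^ n * x ^ n * x) := by
            rw [neg_pow, pow_succ]
            ring
          rw [this]
          have hx0 : x ≠ 0 := hx.1.ne'
          field_simp
        have h4 : -(-Real.log (1 - -x)) / x = Real.log (1 + x) / x := by
          rw [neg_neg, sub_neg_eq_add]
        rw [← h4]
        exact (funext heq : (fun n : ℕ => -((-x) ^ (n + 1) / (n + 1)) / x) = _) ▸ h3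
      exact h2.tsum_eq
    have htend : Tendsto (fun x : ℝ => Real.log (1 + x) / x) (nhdsWithin 1 (Iio 1))
        (𝓝 (Real.log 2)) := by
      have hc : ContinuousAt (fun x : ℝ => Real.log (1 + x) / x) 1 := by
        apply ContinuousAt.div
        · exact (Real.continuousAt_log (by norm_num)).comp (by fun_prop)
        · fun_prop
        · norm_num
      have := hc.tendsto
      simp only [Real.log, one_div] at this
      have h2 : Real.log (1 + 1) / 1 = Real.log 2 := by norm_num
      exact (hc.tendsto.mono_left nhdsWithin_le_nhds).congr' (by
        filter_upwards with x using rfl) |>.congr' (Eventually.of_forall fun x => rfl) |> fun h => h2 ▸ h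
    apply htend.congr'
    filter_upwards [Ioo_mem_nhdsLT_of_mem (by norm_num : (1:ℝ) ∈ Ioc (0:ℝ) 1)] with x hx
    exact (hcong x hx).symm
  have : l = Real.log 2 := tendsto_nhds_unique habel hlog
  exact this ▸ hl

lemma summable_aux : Summable (fun n : ℕ => 1 / ((n : ℝ) + 1) ^ 2) := by
  have h := (summable_nat_add_iff (f := fun n : ℕ => 1 / (n : ℝ) ^ 2) 1).mpr
    (summable_one_div_nat_pow.mpr one_lt_two)
  apply h.congr
  intro n
  push_cast
  ring_nf

lemma summable_clausen (t : ℝ) : Summable (fun n : ℕ => Real.sin ((n + 1) * t) / ((n : ℝ) + 1) ^ 2) := by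
  apply Summable.of_norm_bounded summable_aux
  intro n
  rw [Real.norm_eq_abs, abs_div, abs_of_pos (by positivity : (0:ℝ) < ((n:ℝ)+1)^2), one_div]
  apply div_le_div_of_nonneg_right (Real.abs_sin_le_one _) (by positivity) |>.trans
  rw [one_div]

lemma continuous_clausenS2 : Continuous clausenS2 := by
  apply continuous_tsum (u := fun n : ℕ => 1 / ((n : ℝ) + 1) ^ 2)
  · intro n; fun_prop
  · exact summable_aux
  · intro n t
    rw [Real.norm_eq_abs, abs_div, abs_of_pos (by positivity : (0:ℝ) < ((n:ℝ)+1)^2), one_div]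
    apply div_le_div_of_nonneg_right (Real.abs_sin_le_one _) (by positivity) |>.trans
    rw [one_div]

lemma clausenS2_zero : clausenS2 0 = 0 := by
  simp [clausenS2]

lemma tendsto_partial_clausen (t : ℝ) :
    Tendsto (fun n => ∑ k ∈ Finset.range n, Real.sin (((k : ℝ) + 1) * t) / ((k : ℝ) + 1) ^ 2)
      atTop (𝓝 (clausenS2 t)) :=
  ((summable_clausen t).hasSum.tendsto_sum_nat)

lemma integral_Sp (n : ℕ) (a b : ℝ) :
    ∫ t in a..b, Sp n t =
      ∑ k ∈ Finset.range n, (Real.sin (((k : ℝ) + 1) * b) / ((k : ℝ) + 1) ^ 2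
        - Real.sin (((k : ℝ) + 1) * a) / ((k : ℝ) + 1) ^ 2) := by
  unfold Sp
  rw [intervalIntegral.integral_finset_sum]
  · apply Finset.sum_congr rfl
    intro k _
    have hk : ((k : ℝ) + 1) ≠ 0 := by positivity
    have hF : ∀ t : ℝ, HasDerivAt (fun s => Real.sin (((k : ℝ) + 1) * s) / ((k : ℝ) + 1) ^ 2)
        (Real.cos (((k : ℝ) + 1) * t) / ((k : ℝ) + 1)) t := by
      intro t
      have h1 : HasDerivAt (fun s : ℝ => ((k : ℝ) + 1) * s) ((k : ℝ) + 1) t := by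
        simpa using (hasDerivAt_id t).const_mul ((k : ℝ) + 1)
      have h2 := ((Real.hasDerivAt_sin _).comp t h1).div_const (((k : ℝ) + 1) ^ 2)
      refine h2.congr_deriv ?_
      field_simp
    rw [intervalIntegral.integral_eq_sub_of_hasDerivAt (fun t _ => hF t)
      (Continuous.intervalIntegrable (by fun_prop) _ _)]
  · intro k _
    exact Continuous.intervalIntegrable (by fun_prop) _ _

lemma clausen_FTC_pos {a b : ℝ} (ha : 0 < a) (hab : a ≤ b) (hb : b < 2 * π) :
    ∫ t in a..b, C1 t = clausenS2 b - clausenS2 a := by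
  have hpi := Real.pi_pos
  set A := min a π with hA
  set B := max b π with hB
  have hA0 : 0 < A := lt_min ha hpi
  have hB2 : B < 2 * π := max_lt hb (by linarith)
  have hAB : A ≤ B := le_trans (min_le_right _ _) (le_max_right _ _)
  have hsubIcc : Icc A B ⊆ Ioo 0 (2 * π) := fun s hs => ⟨lt_of_lt_of_le hA0 hs.1, lt_of_le_of_lt hs.2 hB2⟩
  obtain ⟨K, hK0, hK⟩ := oscillation_bound hA0 hB2 hAB
  have hintC1 : IntervalIntegrable C1 volume a b := intervalIntegrable_C1 ha.le hab hb
  have hπmem : π ∈ Icc A B := ⟨min_le_right _ _, le_max_right _ _⟩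
  have habmem : ∀ t ∈ Icc a b, t ∈ Icc A B := fun t ht =>
    ⟨le_trans (min_le_left _ _) ht.1, le_trans ht.2 (le_max_left _ _)⟩
  -- pointwise bound on G_n t - G_n π
  have hGbound : ∀ (n : ℕ) (t : ℝ), t ∈ Icc A B →
      |(C1 t - Sp n t) - (C1 π - Sp n π)| ≤ K / ((n : ℝ) + 1 / 2) := by
    intro n t ht
    have huIcc : uIcc π t ⊆ Icc A B := uIcc_subset_Icc hπmem ht
    have hFTC : ∫ s in π..t, (-Real.cos (((n : ℝ) + 1 / 2) * s) / (2 * Real.sin (s / 2))) =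
        (C1 t - Sp n t) - (C1 π - Sp n π) := by
      apply intervalIntegral.integral_eq_sub_of_hasDerivAt
      · intro s hs
        have := hsubIcc (huIcc hs)
        exact hasDerivAt_G n this.1 this.2
      · apply ContinuousOn.intervalIntegrable
        apply ContinuousOn.div (by fun_prop) (by fun_prop)
        intro s hs
        have hmem := hsubIcc (huIcc hs)
        have hpos := sin_half_pos hmem.1 hmem.2
        exact (by nlinarith : (0:ℝ) < 2 * Real.sin (s / 2)).ne'
    rw [← hFTC]
    have : (∫ s in π..t, -Real.cos (((n : ℝ) + 1 / 2) * s) / (2 * Real.sin (s / 2))) =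
        -∫ s in π..t, Real.cos (((n : ℝ) + 1 / 2) * s) / (2 * Real.sin (s / 2)) := by
      rw [← intervalIntegral.integral_neg]
      apply intervalIntegral.integral_congr
      intro s _
      ring
    rw [this, abs_neg]
    exact hK n π t hπmem ht
  -- integral identity with constant + error
  have hkey : ∀ n : ℕ, |(∫ t in a..b, C1 t) - (∫ t in a..b, Sp n t) - (b - a) * (C1 π - Sp n π)|
      ≤ (b - a) * (K / ((n : ℝ) + 1 / 2)) := by
    intro n
    have hintSp : IntervalIntegrable (Sp n) volume a b :=
      Continuous.intervalIntegrable (by unfold Sp; fun_prop) _ _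
    have hsplit : (∫ t in a..b, C1 t) - (∫ t in a..b, Sp n t) - (b - a) * (C1 π - Sp n π) =
        ∫ t in a..b, ((C1 t - Sp n t) - (C1 π - Sp n π)) := by
      rw [intervalIntegral.integral_sub (hintC1.sub hintSp) (intervalIntegrable_const),
        intervalIntegral.integral_sub hintC1 hintSp, intervalIntegral.integral_const]
      simp [smul_eq_mul]
    rw [hsplit]
    have := intervalIntegral.norm_integral_le_of_norm_le_const
      (C := K / ((n : ℝ) + 1 / 2)) (f := fun t => (C1 t - Sp n t) - (C1 π - Sp n π)) (a := a) (b := b) ?_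
    · refine this.trans ?_
      rw [abs_of_nonneg (by linarith : (0:ℝ) ≤ b - a), mul_comm]
    · intro t ht
      rw [uIoc_of_le hab] at ht
      exact hGbound n t (habmem t ⟨ht.1.le, ht.2⟩)
  -- limits
  have hGpi : Tendsto (fun n : ℕ => C1 π - Sp n π) atTop (𝓝 0) := by
    have hC1pi : C1 π = -Real.log 2 := by
      unfold C1
      rw [Real.sin_pi_div_two, mul_one]
    have hSp : ∀ n, Sp n π = -∑ k ∈ Finset.range n, (-1 : ℝ) ^ k / (k + 1) := by
      intro n
      unfold Sp
      rw [← Finset.sum_neg_distrib]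
      apply Finset.sum_congr rfl
      intro k _
      have : Real.cos (((k : ℝ) + 1) * π) = (-1 : ℝ) ^ (k + 1) := by
        have h := Real.cos_nat_mul_pi_sub 0 (k + 1)
        rw [sub_zero, Real.cos_zero, mul_one] at h
        push_cast at h
        exact_mod_cast h
      rw [this, pow_succ]
      ring
    have : Tendsto (fun n : ℕ => -Real.log 2 - (-∑ k ∈ Finset.range n, (-1 : ℝ) ^ k / (k + 1)))
        atTop (𝓝 (-Real.log 2 - (-Real.log 2))) :=
      (tendsto_const_nhds).sub (alternating_harmonic.neg)
    simp only [sub_neg_eq_add, neg_add_cancel] at this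
    apply this.congr
    intro n
    rw [hC1pi, hSp n]
    ring
  have herr : Tendsto (fun n : ℕ => (b - a) * (K / ((n : ℝ) + 1 / 2))) atTop (𝓝 0) := by
    have h1 : Tendsto (fun n : ℕ => ((n : ℝ) + 1 / 2)) atTop atTop :=
      tendsto_atTop_add_const_right _ _ tendsto_natCast_atTop_atTop
    have h2 := Tendsto.div_atTop (tendsto_const_nhds : Tendsto (fun _ : ℕ => K) atTop (𝓝 K)) h1
    simpa using (h2.const_mul (b - a))
  -- ∫ Sp n → clausenS2 b - clausenS2 a
  have hSptend : Tendsto (fun n : ℕ => ∫ t in a..b, Sp n t) atTop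
      (𝓝 (clausenS2 b - clausenS2 a)) := by
    have := (tendsto_partial_clausen b).sub (tendsto_partial_clausen a)
    apply this.congr
    intro n
    rw [integral_Sp, ← Finset.sum_sub_distrib]
  -- conclude
  have hmain : Tendsto (fun n : ℕ => ∫ t in a..b, C1 t) atTop
      (𝓝 (clausenS2 b - clausenS2 a)) := by
    have hE : Tendsto (fun n : ℕ => (∫ t in a..b, C1 t) - (∫ t in a..b, Sp n t)
        - (b - a) * (C1 π - Sp n π)) atTop (𝓝 0) :=
      squeeze_zero_norm (fun n => hkey n) herr
    have hconst : Tendsto (fun n : ℕ => (b - a) * (C1 π - Sp n π)) atTop (𝓝 0) := by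
      simpa using hGpi.const_mul (b - a)
    have := (hE.add hconst).add hSptend
    simp only [zero_add, add_zero] at this
    apply this.congr
    intro n
    ring
  exact tendsto_nhds_unique tendsto_const_nhds hmain

lemma clausen_FTC {a b : ℝ} (ha : 0 ≤ a) (hab : a ≤ b) (hb : b < 2 * π) :
    ∫ t in a..b, C1 t = clausenS2 b - clausenS2 a := by
  rcases eq_or_lt_of_le ha with rfl | ha0
  · rcases eq_or_lt_of_le hab with rfl | hb0
    · simp
    · -- a = 0, b > 0 : take limits ε → 0⁺
      have hlim1 : Tendsto (fun ε : ℝ => ∫ t in ε..b, C1 t) (nhdsWithin 0 (Ioi 0))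
          (𝓝 (∫ t in (0:ℝ)..b, C1 t)) := by
        have hint : IntervalIntegrable C1 volume 0 b := intervalIntegrable_C1 le_rfl hab hb
        have hcont : ContinuousWithinAt (fun ε : ℝ => ∫ t in ε..b, C1 t) (Icc 0 b) 0 := by
          have h1 : ContinuousOn (fun ε : ℝ => ∫ t in ε..b, C1 t) (Icc 0 b) := by
            have h2 : ContinuousOn (fun ε : ℝ => ∫ t in (0:ℝ)..ε, C1 t) (Icc 0 b) := by
              rw [← Set.uIcc_of_le hab]
              apply intervalIntegral.continuousOn_primitive_interval'
              · exact hint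
              · rw [Set.uIcc_of_le hab]; exact left_mem_Icc.mpr hab
            have h3 : ∀ ε ∈ Icc (0:ℝ) b, (∫ t in ε..b, C1 t) =
                (∫ t in (0:ℝ)..b, C1 t) - ∫ t in (0:ℝ)..ε, C1 t := by
              intro ε hε
              rw [eq_sub_iff_add_eq', intervalIntegral.integral_add_adjacent_intervals]
              · exact (hint.mono_set (by rw [Set.uIcc_of_le hε.1, Set.uIcc_of_le hab]; exact Icc_subset_Icc le_rfl hε.2))
              · exact (hint.mono_set (by rw [Set.uIcc_of_le hε.2, Set.uIcc_of_le hab]; exact Icc_subset_Icc hε.1 le_rfl))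
            exact (continuousOn_const.sub h2).congr h3
          exact h1 0 (left_mem_Icc.mpr hab)
        apply hcont.tendsto.mono_left
        rw [nhdsWithin_le_iff]
        exact mem_of_superset (Ioc_mem_nhdsGT_of_mem ⟨le_rfl, hb0⟩) Ioc_subset_Icc_self
      have hlim2 : Tendsto (fun ε : ℝ => clausenS2 b - clausenS2 ε) (nhdsWithin 0 (Ioi 0))
          (𝓝 (clausenS2 b - clausenS2 0)) := by
        exact (tendsto_const_nhds.sub (continuous_clausenS2.tendsto 0)).mono_left
          nhdsWithin_le_nhds
      have heq : (fun ε : ℝ => ∫ t in ε..b, C1 t) =ᶠ[nhdsWithin 0 (Ioi 0)]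
          (fun ε : ℝ => clausenS2 b - clausenS2 ε) := by
        filter_upwards [Ioc_mem_nhdsGT_of_mem (⟨le_rfl, hb0⟩ : (0:ℝ) ∈ Ico 0 b)] with ε hε
        exact clausen_FTC_pos hε.1 hε.2 hb
      exact tendsto_nhds_unique hlim1 (hlim2.congr' heq.symm)
  · exact clausen_FTC_pos ha0 hab hb

section Assembly

variable {x δ : ℝ} (hx : x ∈ Ioo 0 Real.pi) (hδ : 0 < δ) (hδ' : δ ≤ Real.pi - x)

lemma Iker_eq (hx : x ∈ Ioo 0 Real.pi) (hδ' : δ ≤ Real.pi - x) {y : ℝ}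
    (hy : y ∈ Ioc x (x + δ)) :
    Iker x y = -C1 (y - x) - C1 (y + x) + 2 * C1 y := by
  obtain ⟨hx0, hxπ⟩ := hx
  have hpi := Real.pi_pos
  have h1 : 0 < Real.sin ((y - x) / 2) :=
    Real.sin_pos_of_pos_of_lt_pi (by linarith [hy.1]) (by linarith [hy.2])
  have h2 : 0 < Real.sin ((x + y) / 2) :=
    Real.sin_pos_of_pos_of_lt_pi (by linarith [hy.1]) (by linarith [hy.2])
  have h3 : 0 < Real.sin (y / 2) :=
    Real.sin_pos_of_pos_of_lt_pi (by linarith [hy.1]) (by linarith [hy.2])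
  unfold Iker C1
  rw [Real.log_div (by positivity) (by positivity), Real.log_mul h1.ne' h2.ne']
  rw [Real.log_mul two_ne_zero h1.ne']
  have h2' : 0 < Real.sin ((y + x) / 2) := by
    rw [show (y + x) / 2 = (x + y) / 2 by ring]; exact h2
  rw [Real.log_mul two_ne_zero h2'.ne']
  rw [Real.log_mul two_ne_zero h3.ne']
  rw [Real.log_pow]
  have : (y + x) / 2 = (x + y) / 2 := by ring
  rw [this]
  push_cast
  ring

lemma Iker_neg (hx : x ∈ Ioo 0 Real.pi) (hδ' : δ ≤ Real.pi - x) {y : ℝ}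
    (hy : y ∈ Ioc x (x + δ)) : Iker x y < 0 := by
  obtain ⟨hx0, hxπ⟩ := hx
  have hpi := Real.pi_pos
  have h1 : 0 < Real.sin ((y - x) / 2) :=
    Real.sin_pos_of_pos_of_lt_pi (by linarith [hy.1]) (by linarith [hy.2])
  have h2 : 0 < Real.sin ((x + y) / 2) :=
    Real.sin_pos_of_pos_of_lt_pi (by linarith [hy.1]) (by linarith [hy.2])
  have h3 : 0 < Real.sin (y / 2) :=
    Real.sin_pos_of_pos_of_lt_pi (by linarith [hy.1]) (by linarith [hy.2])
  apply Real.log_neg (by positivity)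
  rw [div_lt_one (by positivity)]
  -- sin((y-x)/2) sin((x+y)/2) = (cos x - cos y)/2 < (1 - cos y)/2 = sin(y/2)^2
  have hprod : Real.sin ((y - x) / 2) * Real.sin ((x + y) / 2) =
      (Real.cos x - Real.cos y) / 2 := by
    have h := Real.cos_sub_cos x y
    have e1 : (x + y) / 2 = (x + y) / 2 := rfl
    have e2 : Real.sin ((x - y) / 2) = -Real.sin ((y - x) / 2) := by
      rw [← Real.sin_neg]; ring_nf
    rw [e2] at h
    linarith [h]
  have hsq : Real.sin (y / 2) ^ 2 = (1 - Real.cos y) / 2 := by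
    have := Real.sin_sq_eq_half_sub (y / 2)
    have e : 2 * (y / 2) = y := by ring
    rw [e] at this
    linarith
  have hcos : Real.cos x < 1 := by
    have := Real.cos_lt_cos_of_nonneg_of_le_pi (le_refl 0) hxπ.le hx0
    simpa using this
  rw [hprod, hsq]
  linarith

end Assembly


/-- Mean value representation of the singular part of `U₂`: for `0 < x < π` and
`0 < δ ≤ π − x` there is `ξ` in the image of `y ↦ y·√(log(1+1/y))` on `[x, x+δ]` with
`−∫ₓ^{x+δ} I(x,y)·y·√(log(1+1/y)) dy` equal to the stated combination of values of `S₂`. -/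
theorem stmt_15 (x δ : ℝ) (hx : x ∈ Ioo 0 Real.pi) (hδ : 0 < δ) (hδ' : δ ≤ Real.pi - x) :
    ∃ ξ ∈ (fun y : ℝ => y * Real.sqrt (Real.log (1 + 1 / y))) '' Icc x (x + δ),
      -(∫ y in x..(x + δ), Iker x y * (y * Real.sqrt (Real.log (1 + 1 / y)))) =
        ξ * ((clausenS2 δ + clausenS2 (2 * x + δ) - 2 * clausenS2 (x + δ)) -
          (clausenS2 0 + clausenS2 (2 * x) - 2 * clausenS2 x)) := by
  obtain ⟨hx0, hxπ⟩ := hx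
  have hpi := Real.pi_pos
  set g : ℝ → ℝ := fun y => y * Real.sqrt (Real.log (1 + 1 / y)) with hg
  set f : ℝ → ℝ := fun y => -Iker x y with hf
  set b := x + δ with hb
  have hxb : x < b := by rw [hb]; linarith
  set F : ℝ → ℝ := fun y => C1 (y - x) + C1 (y + x) - 2 * C1 y with hF
  have hfF : ∀ y ∈ Set.uIoc x b, f y = F y := by
    intro y hy
    rw [uIoc_of_le hxb.le] at hy
    rw [hf, hF]
    simp only
    rw [Iker_eq ⟨hx0, hxπ⟩ hδ' hy]
    ring
  -- integrability
  have h1 : IntervalIntegrable (fun y => C1 (y - x)) volume x b := by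
    have h := (intervalIntegrable_C1 (le_refl 0) hδ.le (by linarith)).comp_sub_right x
    rw [zero_add, show δ + x = b by rw [hb]; ring] at h
    exact h
  have h2 : IntervalIntegrable (fun y => C1 (y + x)) volume x b := by
    have h := (intervalIntegrable_C1 (by linarith : (0:ℝ) ≤ 2 * x) (by linarith)
      (by linarith : 2 * x + δ < 2 * π)).comp_add_right x
    rw [show 2 * x - x = x by ring, show 2 * x + δ - x = b by rw [hb]; ring] at h
    exact h
  have h3 : IntervalIntegrable C1 volume x b :=
    intervalIntegrable_C1 hx0.le hxb.le (by rw [hb]; linarith)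
  have hintF : IntervalIntegrable F volume x b := (h1.add h2).sub (h3.const_mul 2)
  have hintf : IntervalIntegrable f volume x b := by
    apply hintF.congr
    exact fun y hy => (hfF y hy).symm
  have hgcont : ContinuousOn g (Icc x b) := by
    apply ContinuousOn.mul continuousOn_id
    apply ContinuousOn.sqrt
    apply ContinuousOn.log
    · apply ContinuousOn.add continuousOn_const
      apply ContinuousOn.div continuousOn_const continuousOn_id
      intro y hy
      have : 0 < y := lt_of_lt_of_le hx0 hy.1
      exact this.ne'
    · intro y hy
      have hy0 : 0 < y := lt_of_lt_of_le hx0 hy.1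
      have : 0 < 1 + 1 / y := by positivity
      exact this.ne'
  have hintfg : IntervalIntegrable (fun y => f y * g y) volume x b :=
    hintf.mul_continuousOn (by rwa [uIcc_of_le hxb.le])
  have hfnonneg : ∀ y ∈ Icc x b, 0 ≤ f y := by
    intro y hy
    rcases eq_or_lt_of_le hy.1 with rfl | hxy
    · rw [hf]
      simp only [Iker]
      rw [sub_self, zero_div, Real.sin_zero, zero_mul, zero_div, Real.log_zero, neg_zero]
    · exact (neg_nonneg.mpr (Iker_neg ⟨hx0, hxπ⟩ hδ' ⟨hxy, hy.2⟩).le)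
  have hintpos : 0 < ∫ y in x..b, f y := by
    apply intervalIntegral_pos_of_pos_on hintf _ hxb
    intro y hy
    rw [hf]
    simp only [neg_pos]
    exact Iker_neg ⟨hx0, hxπ⟩ hδ' ⟨hy.1, hy.2.le⟩
  -- value of ∫ f
  have hIF : (∫ y in x..b, f y) = ∫ y in x..b, F y :=
    intervalIntegral.integral_congr_ae (Eventually.of_forall hfF)
  have hFval : (∫ y in x..b, F y) =
      (clausenS2 δ + clausenS2 (2 * x + δ) - 2 * clausenS2 (x + δ)) -
        (clausenS2 0 + clausenS2 (2 * x) - 2 * clausenS2 x) := by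
    rw [hF]
    simp only
    rw [intervalIntegral.integral_sub (h1.add h2) (h3.const_mul 2),
      intervalIntegral.integral_add h1 h2, intervalIntegral.integral_const_mul]
    have e1 : (∫ y in x..b, C1 (y - x)) = clausenS2 δ - clausenS2 0 := by
      rw [intervalIntegral.integral_comp_sub_right C1 x, sub_self,
        show b - x = δ by rw [hb]; ring]
      exact clausen_FTC le_rfl hδ.le (by linarith)
    have e2 : (∫ y in x..b, C1 (y + x)) = clausenS2 (2 * x + δ) - clausenS2 (2 * x) := by
      rw [intervalIntegral.integral_comp_add_right C1 x,
        show x + x = 2 * x by ring, show b + x = 2 * x + δ by rw [hb]; ring]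
      exact clausen_FTC (by linarith) (by linarith) (by linarith)
    have e3 : (∫ y in x..b, C1 y) = clausenS2 (x + δ) - clausenS2 x := by
      rw [show b = x + δ from hb]
      exact clausen_FTC hx0.le (by linarith) (by linarith)
    rw [e1, e2, e3]
    ring
  -- min and max of g
  obtain ⟨u, hu, hgu⟩ := isCompact_Icc.exists_isMinOn (⟨x, left_mem_Icc.mpr hxb.le⟩ :
    (Icc x b).Nonempty) hgcont
  obtain ⟨v, hv, hgv⟩ := isCompact_Icc.exists_isMaxOn (⟨x, left_mem_Icc.mpr hxb.le⟩ :
    (Icc x b).Nonempty) hgcont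
  rw [isMinOn_iff] at hgu
  rw [isMaxOn_iff] at hgv
  have hlow : g u * ∫ y in x..b, f y ≤ ∫ y in x..b, f y * g y := by
    have hnn : 0 ≤ ∫ y in x..b, f y * (g y - g u) :=
      intervalIntegral.integral_nonneg hxb.le
        (fun y hy => mul_nonneg (hfnonneg y hy) (sub_nonneg.mpr (hgu y hy)))
    have e : (fun y => f y * (g y - g u)) = fun y => f y * g y - f y * g u :=
      funext fun y => by ring
    rw [e, intervalIntegral.integral_sub hintfg (hintf.mul_const _),
      intervalIntegral.integral_mul_const] at hnn
    linarith
  have hupp : (∫ y in x..b, f y * g y) ≤ g v * ∫ y in x..b, f y := by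
    have hnn : 0 ≤ ∫ y in x..b, f y * (g v - g y) :=
      intervalIntegral.integral_nonneg hxb.le
        (fun y hy => mul_nonneg (hfnonneg y hy) (sub_nonneg.mpr (hgv y hy)))
    have e : (fun y => f y * (g v - g y)) = fun y => f y * g v - f y * g y :=
      funext fun y => by ring
    rw [e, intervalIntegral.integral_sub (hintf.mul_const _) hintfg,
      intervalIntegral.integral_mul_const] at hnn
    linarith
  set ξ := (∫ y in x..b, f y * g y) / (∫ y in x..b, f y) with hξ
  have hξ1 : g u ≤ ξ := (le_div_iff₀ hintpos).mpr hlow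
  have hξ2 : ξ ≤ g v := (div_le_iff₀ hintpos).mpr hupp
  refine ⟨ξ, ?_, ?_⟩
  · have hsub : uIcc u v ⊆ Icc x b := uIcc_subset_Icc hu hv
    have hIVT := intermediate_value_uIcc (hgcont.mono hsub)
    have hmem : ξ ∈ uIcc (g u) (g v) := by
      rw [Set.uIcc_of_le (hξ1.trans hξ2)]
      exact ⟨hξ1, hξ2⟩
    obtain ⟨w, hw, hgw⟩ := hIVT hmem
    exact ⟨w, hsub hw, hgw⟩
  · have hneg : -(∫ y in x..b, Iker x y * g y) = ∫ y in x..b, f y * g y := by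
      rw [← intervalIntegral.integral_neg]
      apply intervalIntegral.integral_congr
      intro y _
      rw [hf]
      ring
    rw [hneg]
    rw [show (clausenS2 δ + clausenS2 (2 * x + δ) - 2 * clausenS2 (x + δ)) -
        (clausenS2 0 + clausenS2 (2 * x) - 2 * clausenS2 x) = ∫ y in x..b, f y from
      (hIF.trans hFval).symm]
    rw [hξ]
    field_simp
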